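/- For n = 1, 2, 3, …, let X_n be a locally compact, second countable, Hausdorff topological space, let A = Π_{n=1}^∞ X_n^∞ be the product of the one-point compactifications X_n^∞ of the X_n, and let W_0 = ({0} ∪ ∪_{k=1}^∞ X_1 × ⋯ × X_k) ∪ Π_{n=1}^∞ X_n be equipped with the quotient topology induced by the truncation map Q : A → W_0. Then W_0 is a compact metrizable space. -/

import Mathlib

open Filter Topology

/-- The set `W₀ = Y₀ ∪ Z`: the disjoint union of the finite products
`Y^k = X_1 × ⋯ × X_k` (with `Y^0 = {0}` a single point, the empty string) and the
infinite product `Z = Π_{n} X_n`.  (Indices are `0`-based here: `X 0, X 1, …` play the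
roles of `X_1, X_2, …`.) -/
def W0 (X : ℕ → Type) : Type := (Σ k : ℕ, ∀ i : Fin k, X i) ⊕ (∀ n, X n)

namespace W0

variable {X : ℕ → Type}

/-- A finite string, an element of `Y₀ = ∪_k Y^k ⊂ W₀`. -/
def fin (p : Σ k : ℕ, ∀ i : Fin k, X i) : W0 X := Sum.inl p

/-- An infinite string, an element of `Z = Π_n X_n ⊂ W₀`. -/
def inf (z : ∀ n, X n) : W0 X := Sum.inr z

/-- The point `0`, the empty string: the unique element of `Y^0`. -/
def zero : W0 X := Sum.inl ⟨0, fun i => i.elim0⟩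

/-- The length `ℓ(w) ∈ ℕ ∪ {∞}` of an element of `W₀`. -/
def len : W0 X → ℕ∞ := Sum.elim (fun p => (p.1 : ℕ∞)) (fun _ => ⊤)

/-- The `i`-th coordinate of an element of `W₀`, as an element of the one-point
compactification `X_i^∞`; it is taken to be `∞_i` when `i ≥ ℓ(w)`. -/
def coord (w : W0 X) (i : ℕ) : OnePoint (X i) :=
  Sum.elim
    (fun p : Σ k : ℕ, ∀ j : Fin k, X j =>
      if h : i < p.1 then ((p.2 ⟨i, h⟩ : X i) : OnePoint (X i)) else OnePoint.infty)
    (fun z => ((z i : X i) : OnePoint (X i))) w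

/-- The value of a point of `X^∞` other than `∞`. -/
noncomputable def val {Y : Type} (o : OnePoint Y) (h : o ≠ OnePoint.infty) : Y :=
  (OnePoint.ne_infty_iff_exists.mp h).choose

open Classical in
/-- The truncation map `Q : A = Π_n X_n^∞ → W₀`: `Q({x_i}) = {x_i} ∈ Z` if no
coordinate is a point at infinity; `Q({x_i}) = (x_1, …, x_n) ∈ Y^n` if `n` is smallest
with `x_{n+1} = ∞_{n+1}`; `Q({x_i}) = 0` if `x_1 = ∞_1`. -/
noncomputable def Q (x : ∀ n, OnePoint (X n)) : W0 X :=
  if h : ∃ n, x n = OnePoint.infty then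
    fin ⟨Nat.find h, fun i => val (x i) (Nat.find_min h i.isLt)⟩
  else
    inf fun n => val (x n) (fun hn => h ⟨n, hn⟩)

/-- `W₀` carries the quotient topology induced by the surjection `Q` from the product
`A = Π_n X_n^∞` of the one-point compactifications. -/
noncomputable instance [∀ n, TopologicalSpace (X n)] : TopologicalSpace (W0 X) :=
  TopologicalSpace.coinduced Q Pi.topologicalSpace

end W0







section GenTop
open Set TopologicalSpace

variable {α β : Type} [TopologicalSpace α] [TopologicalSpace β]

theorem aux_isClosedMap [CompactSpace α] [T2Space α] {f : α → β}
    (hq : Topology.IsQuotientMap f)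
    (hker : IsClosed {p : α × α | f p.1 = f p.2}) : IsClosedMap f := by
  intro C hC
  rw [← hq.isClosed_preimage]
  have h1 : f ⁻¹' (f '' C) = Prod.fst '' ({p : α × α | f p.1 = f p.2} ∩ (univ ×ˢ C)) := by
    ext x
    simp only [mem_preimage, mem_image, mem_inter_iff, mem_setOf_eq, mem_prod, mem_univ,
      true_and, Prod.exists]
    constructor
    · rintro ⟨y, hy, hxy⟩
      exact ⟨x, y, ⟨hxy.symm, hy⟩, rfl⟩
    · rintro ⟨a, b, ⟨hab, hb⟩, rfl⟩
      exact ⟨b, hb, hab.symm⟩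
  rw [h1]
  exact (((hker.inter (isClosed_univ.prod hC)).isCompact).image continuous_fst).isClosed

theorem aux_t2 [CompactSpace α] [T2Space α] {f : α → β}
    (hq : Topology.IsQuotientMap f)
    (hker : IsClosed {p : α × α | f p.1 = f p.2}) : T2Space β := by
  have hcm := aux_isClosedMap hq hker
  have hfib : ∀ a : α, IsClosed {x | f x = f a} := fun a =>
    hker.preimage (continuous_id.prodMk continuous_const)
  refine ⟨fun b1 b2 hne => ?_⟩
  obtain ⟨a1, rfl⟩ := hq.surjective b1
  obtain ⟨a2, rfl⟩ := hq.surjective b2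
  have hd : Disjoint {x | f x = f a1} {x | f x = f a2} := by
    rw [Set.disjoint_left]
    intro x h1 h2
    exact hne (h1 ▸ h2 ▸ rfl)
  obtain ⟨U, V, hU, hV, hsU, hsV, hUV⟩ := NormalSpace.normal _ _ (hfib a1) (hfib a2) hd
  refine ⟨(f '' Uᶜ)ᶜ, (f '' Vᶜ)ᶜ, (hcm _ hU.isClosed_compl).isOpen_compl,
    (hcm _ hV.isClosed_compl).isOpen_compl, ?_, ?_, ?_⟩
  · rintro ⟨x, hxU, hfx⟩
    exact hxU (hsU hfx)
  · rintro ⟨x, hxV, hfx⟩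
    exact hxV (hsV hfx)
  · rw [Set.disjoint_left]
    rintro b hb1 hb2
    obtain ⟨a, rfl⟩ := hq.surjective b
    have haU : a ∈ U := by
      by_contra h
      exact hb1 ⟨a, h, rfl⟩
    have haV : a ∈ V := by
      by_contra h
      exact hb2 ⟨a, h, rfl⟩
    exact hUV.le_bot ⟨haU, haV⟩

theorem aux_secondCountable [CompactSpace α] [SecondCountableTopology α] [T2Space β]
    {f : α → β} (hc : Continuous f) (hs : Function.Surjective f) :
    SecondCountableTopology β := by
  have hcm : IsClosedMap f := hc.isClosedMap
  set b : Set (Set α) := countableBasis α with hb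
  have hbb := isBasis_countableBasis α
  refine IsTopologicalBasis.secondCountableTopology
    (b := (fun t : Set (Set α) => (f '' (⋃₀ t)ᶜ)ᶜ) '' {t | t.Finite ∧ t ⊆ b}) ?_
    ((countable_setOf_finite_subset (countable_countableBasis α)).image _)
  apply isTopologicalBasis_of_isOpen_of_nhds
  · rintro _ ⟨t, ⟨ht1, ht2⟩, rfl⟩
    exact (hcm _ (isOpen_sUnion fun s hsx => hbb.isOpen (ht2 hsx)).isClosed_compl).isOpen_compl
  · intro y u hyu hu
    have hF : IsCompact (f ⁻¹' {y}) := (isClosed_singleton.preimage hc).isCompact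
    have hFu : f ⁻¹' {y} ⊆ ⋃ v ∈ {v | v ∈ b ∧ v ⊆ f ⁻¹' u}, v := by
      intro x hx
      obtain ⟨v, hv, hxv, hvu⟩ := hbb.exists_subset_of_mem_open
        (show x ∈ f ⁻¹' u from by
          have : f x = y := hx
          simp [Set.mem_preimage, this, hyu])
        (hu.preimage hc)
      exact Set.mem_biUnion ⟨hv, hvu⟩ hxv
    obtain ⟨t, htsub, htfin, htcov⟩ := hF.elim_finite_subcover_image
      (fun v hv => hbb.isOpen hv.1) hFu
    refine ⟨(f '' (⋃₀ t)ᶜ)ᶜ, ⟨t, ⟨htfin, fun s hst => (htsub hst).1⟩, rfl⟩, ?_, ?_⟩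
    · rintro ⟨x, hxt, hfx⟩
      exact hxt (by simpa [Set.sUnion_eq_biUnion] using htcov (show x ∈ f ⁻¹' {y} by simp [hfx]))
    · intro z hz
      obtain ⟨x, rfl⟩ := hs z
      have hxt : x ∈ ⋃₀ t := by
        by_contra h
        exact hz ⟨x, h, rfl⟩
      obtain ⟨s, hst, hxs⟩ := hxt
      exact (htsub hst).2 hxs

end GenTop
section OPAux
open Set TopologicalSpace



theorem aux_onePoint_secondCountable (Y : Type) [TopologicalSpace Y] [LocallyCompactSpace Y]
    [SecondCountableTopology Y] [T2Space Y] : SecondCountableTopology (OnePoint Y) := by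
  classical
  have K : CompactExhaustion Y := CompactExhaustion.choice Y
  refine IsTopologicalBasis.secondCountableTopology
    (b := ((fun s => ((↑) : Y → OnePoint Y) '' s) '' countableBasis Y) ∪
      Set.range fun n => (((↑) : Y → OnePoint Y) '' (K n))ᶜ) ?_
    (((countable_countableBasis Y).image _).union (countable_range _))
  apply isTopologicalBasis_of_isOpen_of_nhds
  · rintro s (⟨t, ht, rfl⟩ | ⟨n, rfl⟩)
    · exact OnePoint.isOpen_image_coe.2 ((isBasis_countableBasis Y).isOpen ht)
    · exact OnePoint.isOpen_compl_image_coe.2 ⟨(K.isCompact n).isClosed, K.isCompact n⟩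
  · intro x u hxu hu
    by_cases hx : x = OnePoint.infty
    · subst hx
      have h1 : IsCompact (((↑) : Y → OnePoint Y) ⁻¹' u)ᶜ :=
        ((OnePoint.isOpen_iff_of_mem' hxu).1 hu).1
      obtain ⟨n, hn⟩ := K.exists_superset_of_isCompact h1
      refine ⟨(((↑) : Y → OnePoint Y) '' (K n))ᶜ, Or.inr ⟨n, rfl⟩,
        OnePoint.infty_notMem_image_coe, ?_⟩
      intro z hz
      by_cases hzi : z = OnePoint.infty
      · exact hzi ▸ hxu
      · obtain ⟨y, rfl⟩ := OnePoint.ne_infty_iff_exists.1 hzi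
        by_contra hzu
        exact hz (Set.mem_image_of_mem _ (hn hzu))
    · obtain ⟨y, rfl⟩ := OnePoint.ne_infty_iff_exists.1 hx
      obtain ⟨v, hv, hyv, hvu⟩ := (isBasis_countableBasis Y).exists_subset_of_mem_open
        (show y ∈ ((↑) : Y → OnePoint Y) ⁻¹' u from hxu) (hu.preimage OnePoint.continuous_coe)
      exact ⟨(↑) '' v, Or.inl ⟨v, hv, rfl⟩, Set.mem_image_of_mem _ hyv,
        by rintro _ ⟨w, hw, rfl⟩; exact hvu hw⟩

end OPAux

namespace W0

variable {X : ℕ → Type}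

-- auxiliary lemmas

theorem coe_val {Y : Type} (o : OnePoint Y) (h : o ≠ OnePoint.infty) :
    ((val o h : Y) : OnePoint Y) = o :=
  (OnePoint.ne_infty_iff_exists.mp h).choose_spec

theorem fin_ext' {k k' : ℕ} (f : ∀ i : Fin k, X i) (g : ∀ i : Fin k', X i) (hk : k = k')
    (h : ∀ i (h1 : i < k) (h2 : i < k'), f ⟨i, h1⟩ = g ⟨i, h2⟩) :
    (⟨k, f⟩ : Σ k : ℕ, ∀ i : Fin k, X i) = ⟨k', g⟩ := by
  subst hk
  congr 1
  funext i
  exact h i i.isLt i.isLt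

open Classical in
theorem coord_Q (x : ∀ n, OnePoint (X n)) (n : ℕ) :
    coord (Q x) n =
      if ∃ m, m < n ∧ x m = OnePoint.infty then OnePoint.infty else x n := by
  by_cases hx : ∃ k, x k = OnePoint.infty
  · rw [Q, dif_pos hx]
    by_cases hn : n < Nat.find hx
    · rw [show coord (fin ⟨Nat.find hx, fun i => val (x i) (Nat.find_min hx i.isLt)⟩) n =
          dite (n < Nat.find hx) (fun h => ((val (x n) (Nat.find_min hx h) : X n) : OnePoint (X n)))
            (fun _ => OnePoint.infty) from rfl, dif_pos hn, coe_val, if_neg]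
      rintro ⟨m, hmn, hm⟩
      exact Nat.find_min hx (hmn.trans hn) hm
    · rw [show coord (fin ⟨Nat.find hx, fun i => val (x i) (Nat.find_min hx i.isLt)⟩) n =
          dite (n < Nat.find hx) (fun h => ((val (x n) (Nat.find_min hx h) : X n) : OnePoint (X n)))
            (fun _ => OnePoint.infty) from rfl, dif_neg hn]
      rcases lt_or_eq_of_le (Nat.le_of_not_lt hn) with h | h
      · rw [if_pos ⟨Nat.find hx, h, Nat.find_spec hx⟩]
      · rw [if_neg, ← h, Nat.find_spec hx]
        rintro ⟨m, hmn, hm⟩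
        exact Nat.find_min hx (h ▸ hmn) hm
  · rw [Q, dif_neg hx]
    rw [show coord (inf fun n => val (x n) (fun hn => hx ⟨n, hn⟩)) n =
        ((val (x n) (fun hn => hx ⟨n, hn⟩) : X n) : OnePoint (X n)) from rfl, coe_val, if_neg]
    rintro ⟨m, _, hm⟩
    exact hx ⟨m, hm⟩


open Classical in
theorem key_aux {x y : ∀ n, OnePoint (X n)}
    (hc : ∀ m, (if ∃ k, k < m ∧ x k = OnePoint.infty then OnePoint.infty else x m) =
      (if ∃ k, k < m ∧ y k = OnePoint.infty then OnePoint.infty else y m))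
    {n m0 : ℕ} (hm0 : m0 < n) (hx0 : x m0 = OnePoint.infty) :
    ∃ m, m < n ∧ x m = OnePoint.infty ∧ y m = OnePoint.infty := by
  have hex : ∃ m, x m = OnePoint.infty := ⟨m0, hx0⟩
  set N := Nat.find hex with hN
  have hNn : N < n := lt_of_le_of_lt (Nat.find_min' hex hx0) hm0
  have hxN : x N = OnePoint.infty := Nat.find_spec hex
  have hcN := hc N
  rw [if_neg (by rintro ⟨k, hk, hxk⟩; exact Nat.find_min hex hk hxk)] at hcN
  by_cases hyc : ∃ k, k < N ∧ y k = OnePoint.infty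
  · exfalso
    obtain ⟨k0, hk0, hyk0⟩ := hyc
    have hey : ∃ m, y m = OnePoint.infty := ⟨k0, hyk0⟩
    have hMN : Nat.find hey < N := lt_of_le_of_lt (Nat.find_min' hey hyk0) hk0
    have hcM := hc (Nat.find hey)
    rw [if_neg (by rintro ⟨k, hk, hxk⟩; exact Nat.find_min hex (hk.trans hMN) hxk)] at hcM
    rw [if_neg (by rintro ⟨k, hk, hyk⟩; exact Nat.find_min hey hk hyk)] at hcM
    exact Nat.find_min hex hMN (hcM.trans (Nat.find_spec hey))
  · rw [if_neg hyc] at hcN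
    exact ⟨N, hNn, hxN, (hxN ▸ hcN).symm⟩

theorem Q_eq_iff (x y : ∀ n, OnePoint (X n)) :
    Q x = Q y ↔ ∀ n, x n = y n ∨
      ∃ m, m < n ∧ x m = OnePoint.infty ∧ y m = OnePoint.infty := by
  classical
  constructor
  · intro h n
    have hc : ∀ m, (if ∃ k, k < m ∧ x k = OnePoint.infty then OnePoint.infty else x m) =
        (if ∃ k, k < m ∧ y k = OnePoint.infty then OnePoint.infty else y m) := by
      intro m
      rw [← coord_Q, ← coord_Q, h]
    by_cases hEx : ∃ m, m < n ∧ x m = OnePoint.infty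
    · obtain ⟨m0, hm0, hx0⟩ := hEx
      exact Or.inr (key_aux hc hm0 hx0)
    · by_cases hEy : ∃ m, m < n ∧ y m = OnePoint.infty
      · obtain ⟨m0, hm0, hy0⟩ := hEy
        obtain ⟨m, hm, hym, hxm⟩ := key_aux (fun m => (hc m).symm) hm0 hy0
        exact Or.inr ⟨m, hm, hxm, hym⟩
      · have := hc n
        rw [if_neg hEx, if_neg hEy] at this
        exact Or.inl this
  · intro hP
    by_cases hx : ∃ k, x k = OnePoint.infty
    · have hcoords : ∀ k, k ≤ Nat.find hx → x k = y k := by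
        intro k hk
        rcases hP k with h | ⟨m, hm, hxm, _⟩
        · exact h
        · exact absurd hxm (Nat.find_min hx (lt_of_lt_of_le hm hk))
      have hyN : y (Nat.find hx) = OnePoint.infty :=
        (hcoords _ le_rfl) ▸ Nat.find_spec hx
      have hy : ∃ k, y k = OnePoint.infty := ⟨_, hyN⟩
      have hfind : Nat.find hy = Nat.find hx := by
        rw [Nat.find_eq_iff]
        exact ⟨hyN, fun m hm hym =>
          Nat.find_min hx hm ((hcoords m hm.le) ▸ hym)⟩
      rw [Q, dif_pos hx, Q, dif_pos hy]
      exact congrArg Sum.inl (fin_ext' _ _ hfind.symm (fun i h1 h2 =>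
        OnePoint.coe_injective (by
          rw [coe_val, coe_val, hcoords i (le_of_lt (hfind ▸ h2))])))
    · have hxy : x = y := by
        funext k
        rcases hP k with h | ⟨m, _, hxm, _⟩
        · exact h
        · exact absurd hxm (fun hh => hx ⟨m, hh⟩)
      rw [hxy]

theorem Q_surjective : Function.Surjective (Q : (∀ n, OnePoint (X n)) → W0 X) := by
  classical
  rintro (⟨k, p⟩ | z)
  · refine ⟨fun n => if h : n < k then ((p ⟨n, h⟩ : X n) : OnePoint (X n))
      else OnePoint.infty, ?_⟩
    set x : ∀ n, OnePoint (X n) := fun n => if h : n < k then ((p ⟨n, h⟩ : X n) : OnePoint (X n))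
      else OnePoint.infty with hxdef
    have hx : ∃ n, x n = OnePoint.infty := ⟨k, dif_neg (lt_irrefl k)⟩
    have hfind : Nat.find hx = k := by
      rw [Nat.find_eq_iff]
      refine ⟨dif_neg (lt_irrefl k), fun m hm hh => ?_⟩
      exact OnePoint.coe_ne_infty _ ((show x m = ((p ⟨m, hm⟩ : X m) : OnePoint (X m)) from dif_pos hm) ▸ hh)
    rw [Q, dif_pos hx]
    exact congrArg Sum.inl (fin_ext' _ _ hfind (fun i h1 h2 =>
      OnePoint.coe_injective (by
        rw [coe_val]
        exact dif_pos h2)))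
  · refine ⟨fun n => ((z n : X n) : OnePoint (X n)), ?_⟩
    have hx : ¬ ∃ n, (((z n : X n) : OnePoint (X n))) = OnePoint.infty := by
      rintro ⟨n, hn⟩
      exact OnePoint.coe_ne_infty _ hn
    rw [Q, dif_neg hx]
    exact congrArg Sum.inr (funext fun n => OnePoint.coe_injective (coe_val _ _))

end W0

/-- Theorem 3.2: for locally compact, second countable, Hausdorff spaces `X_n`, the
space `W₀`, with the quotient topology induced by the truncation map
`Q : Π_n X_n^∞ → W₀`, is a compact metrizable space. -/
theorem stmt6 (X : ℕ → Type) [∀ n, TopologicalSpace (X n)]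
    [∀ n, LocallyCompactSpace (X n)] [∀ n, SecondCountableTopology (X n)]
    [∀ n, T2Space (X n)] :
    CompactSpace (W0 X) ∧ TopologicalSpace.MetrizableSpace (W0 X) := by
  classical
  haveI : ∀ n, SecondCountableTopology (OnePoint (X n)) :=
    fun n => aux_onePoint_secondCountable (X n)
  have hQc : Continuous (W0.Q : (∀ n, OnePoint (X n)) → W0 X) := continuous_coinduced_rng
  have hq : Topology.IsQuotientMap (W0.Q : (∀ n, OnePoint (X n)) → W0 X) :=
    ⟨⟨rfl⟩, W0.Q_surjective⟩
  have hker : IsClosed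
      {p : (∀ n, OnePoint (X n)) × (∀ n, OnePoint (X n)) | W0.Q p.1 = W0.Q p.2} := by
    have heq : {p : (∀ n, OnePoint (X n)) × (∀ n, OnePoint (X n)) | W0.Q p.1 = W0.Q p.2} =
        ⋂ n, ({p : (∀ n, OnePoint (X n)) × (∀ n, OnePoint (X n)) | p.1 n = p.2 n} ∪
          ⋃ m ∈ Set.Iio n,
            ({p : (∀ n, OnePoint (X n)) × (∀ n, OnePoint (X n)) | p.1 m = OnePoint.infty} ∩
              {p : (∀ n, OnePoint (X n)) × (∀ n, OnePoint (X n)) | p.2 m = OnePoint.infty})) := by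
      ext p
      simp only [Set.mem_setOf_eq, Set.mem_iInter, Set.mem_union, Set.mem_iUnion,
        Set.mem_inter_iff, Set.mem_Iio, exists_prop, W0.Q_eq_iff]
    rw [heq]
    refine isClosed_iInter fun n => IsClosed.union ?_ ?_
    · exact isClosed_eq ((continuous_apply n).comp continuous_fst)
        ((continuous_apply n).comp continuous_snd)
    · exact (Set.finite_Iio n).isClosed_biUnion fun m _ =>
        (isClosed_eq ((continuous_apply m).comp continuous_fst) continuous_const).inter
          (isClosed_eq ((continuous_apply m).comp continuous_snd) continuous_const)
  haveI hT2 : T2Space (W0 X) := aux_t2 hq hker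
  haveI : SecondCountableTopology (W0 X) := aux_secondCountable hQc W0.Q_surjective
  haveI : CompactSpace (W0 X) :=
    ⟨by rw [← W0.Q_surjective.range_eq]; exact isCompact_range hQc⟩
  exact ⟨inferInstance, inferInstance⟩
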